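/- Let K be a field and let R be an amenable affine K-algebra without zero divisors. Then R has Goldie dimension 1: R does not contain two independent nonzero left ideals, i.e. for any nonzero left ideals I, J of R one has I ∩ J ≠ 0. -/
import Mathlib


open Filter Module

/-- `W·r`: the image of the finite dimensional subspace `W` under right multiplication
by `r`. -/
noncomputable def rightMulSubmodule (K : Type*) [Field K] {R : Type*} [Ring R] [Algebra K R]
    (W : Submodule K R) (r : R) : Submodule K R :=
  W.map (LinearMap.mulRight K r)

/-- A Følner exhaustion of a `K`-algebra `R`: an increasing sequence of finite dimensional
subspaces exhausting `R` such that for every `r ∈ R`,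
`dim (Wₙ·r + Wₙ) / dim Wₙ → 1`. -/
def FolnerExhaustion (K : Type*) [Field K] (R : Type*) [Ring R] [Algebra K R]
    (W : ℕ → Submodule K R) : Prop :=
  Monotone W ∧ (∀ n, FiniteDimensional K (W n)) ∧ (∀ x : R, ∃ n, x ∈ W n) ∧
    ∀ r : R,
      Tendsto (fun n => (finrank K ↥(rightMulSubmodule K (W n) r ⊔ W n) : ℝ) / finrank K (W n))
        atTop (nhds 1)

/-- An affine algebra is (left) amenable if it admits a Følner exhaustion. -/
def AmenableAlgebra (K : Type*) [Field K] (R : Type*) [Ring R] [Algebra K R] : Prop :=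
  ∃ W : ℕ → Submodule K R, FolnerExhaustion K R W


/-- An amenable affine algebra without zero divisors has Goldie dimension 1: any two nonzero
left ideals intersect nontrivially. -/
theorem amenable_goldie_dimension_one (K : Type*) [Field K] (R : Type*) [Ring R]
    [Algebra K R] [Algebra.FiniteType K R] [NoZeroDivisors R]
    (hR : AmenableAlgebra K R) :
    ∀ I J : Ideal R, I ≠ ⊥ → J ≠ ⊥ → I ⊓ J ≠ ⊥ := by
  intro I J hI hJ hIJ
  obtain ⟨a, haI, ha⟩ := Submodule.exists_mem_ne_zero_of_ne_bot hI
  obtain ⟨b, hbJ, hb⟩ := Submodule.exists_mem_ne_zero_of_ne_bot hJ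
  obtain ⟨W, hmono, hfd, hexh, hconv⟩ := hR
  -- choose n with both ratios in (3/4, 5/4)
  have hmem : Set.Ioo (3/4 : ℝ) (5/4) ∈ nhds (1 : ℝ) := Ioo_mem_nhds (by norm_num) (by norm_num)
  obtain ⟨n, hna, hnb⟩ := (((hconv a).eventually hmem).and ((hconv b).eventually hmem)).exists
  haveI := hfd n
  set V := W n with hV
  set Va := rightMulSubmodule K V a with hVa
  set Vb := rightMulSubmodule K V b with hVb
  haveI : FiniteDimensional K Va := Module.Finite.map _ _
  haveI : FiniteDimensional K Vb := Module.Finite.map _ _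
  set d : ℕ := finrank K V with hd
  -- d > 0
  have hdpos : 0 < d := by
    rcases Nat.eq_zero_or_pos d with h | h
    · exfalso
      rw [h] at hna
      norm_num at hna
    · exact h
  -- injectivity of right multiplication
  have hinj : ∀ r : R, r ≠ 0 → Function.Injective (LinearMap.mulRight K r) := by
    intro r hr
    rw [← LinearMap.ker_eq_bot]
    ext x
    simp only [LinearMap.mem_ker, LinearMap.mulRight_apply, Submodule.mem_bot]
    constructor
    · intro hx
      rcases mul_eq_zero.mp hx with h | h
      · exact h
      · exact absurd h hr
    · rintro rfl; exact zero_mul r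
  have hranka : finrank K Va = d := ((V.equivMapOfInjective _ (hinj a ha)).finrank_eq).symm
  have hrankb : finrank K Vb = d := ((V.equivMapOfInjective _ (hinj b hb)).finrank_eq).symm
  -- Va ≤ I, Vb ≤ J (as K-subspaces)
  have hVaI : Va ≤ I.restrictScalars K := by
    rintro x ⟨w, _, rfl⟩
    exact I.smul_mem w haI
  have hVbJ : Vb ≤ J.restrictScalars K := by
    rintro x ⟨w, _, rfl⟩
    exact J.smul_mem w hbJ
  have hdisj : Va ⊓ Vb = ⊥ := by
    rw [eq_bot_iff]
    intro x hx
    have : x ∈ I ⊓ J := ⟨hVaI hx.1, hVbJ hx.2⟩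
    rw [hIJ] at this
    exact this
  -- dim (Va ⊔ Vb) = 2d
  have h2d : finrank K ↥(Va ⊔ Vb) = 2 * d := by
    have := Submodule.finrank_sup_add_finrank_inf_eq Va Vb
    rw [hdisj, hranka, hrankb, finrank_bot] at this
    omega
  -- bounds from ratios
  have hxa : (finrank K ↥(Va ⊔ V) : ℝ) < 5/4 * d := by
    have := hna.2
    rw [div_lt_iff₀ (by exact_mod_cast hdpos)] at this
    linarith
  have hxb : (finrank K ↥(Vb ⊔ V) : ℝ) < 5/4 * d := by
    have := hnb.2
    rw [div_lt_iff₀ (by exact_mod_cast hdpos)] at this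
    linarith
  -- main inequality
  have hle : finrank K ↥(Va ⊔ Vb) + d ≤ finrank K ↥(Va ⊔ V) + finrank K ↥(Vb ⊔ V) := by
    have key := Submodule.finrank_sup_add_finrank_inf_eq (Va ⊔ V) (Vb ⊔ V)
    have h1 : finrank K ↥(Va ⊔ Vb) ≤ finrank K ↥((Va ⊔ V) ⊔ (Vb ⊔ V)) :=
      Submodule.finrank_mono (sup_le (le_sup_of_le_left le_sup_left)
        (le_sup_of_le_right le_sup_left))
    have h2 : d ≤ finrank K ↥((Va ⊔ V) ⊓ (Vb ⊔ V)) :=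
      Submodule.finrank_mono (le_inf le_sup_right le_sup_right)
    omega
  have : (finrank K ↥(Va ⊔ Vb) : ℝ) + d ≤ finrank K ↥(Va ⊔ V) + finrank K ↥(Vb ⊔ V) := by
    exact_mod_cast hle
  rw [h2d] at this
  push_cast at this
  have hdr : (0 : ℝ) < d := by exact_mod_cast hdpos
  linarith
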